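/- Let R be a commutative ring, {M_i, φ_{i,j} | i, j ∈ Γ} a direct system of R-modules over a directed index set Γ, and for each i let ψ_i : M_i → L_i be an ℒ-envelope of M_i with the unique mapping property, so that the L_i form a direct system with transition maps induced by the unique mapping property and the ψ_i give a morphism of direct systems. Then the induced map lim→ M_i → lim→ L_i is an ℒ-envelope of lim→ M_i; in particular, the Lucas envelope of lim→ M_i is isomorphic to lim→ L_i. -/

import Mathlib

open CategoryTheory

universe u

/-- An ideal is dense if its annihilator in `R` is zero. -/
def Ideal.IsDense {R : Type u} [CommRing R] (I : Ideal R) : Prop :=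
  ∀ r : R, (∀ a ∈ I, a * r = 0) → r = 0

/-- An ideal is semi-regular if it contains a finitely generated dense subideal. -/
def Ideal.IsSemiRegular {R : Type u} [CommRing R] (I : Ideal R) : Prop :=
  ∃ J : Ideal R, J ≤ I ∧ J.FG ∧ J.IsDense

/-- Membership in `𝒬`: finitely generated semi-regular ideals. -/
def Ideal.IsInQ {R : Type u} [CommRing R] (I : Ideal R) : Prop :=
  I.FG ∧ I.IsSemiRegular

/-- An `R`-module is `𝒬`-torsion if every element is annihilated by some `I ∈ 𝒬`. -/
def IsQTorsion (R : Type u) [CommRing R] (M : Type u) [AddCommGroup M] [Module R M] : Prop :=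
  ∀ x : M, ∃ I : Ideal R, I.IsInQ ∧ ∀ a ∈ I, a • x = 0

/-- An `R`-module is `𝒬`-torsion-free if no nonzero element is annihilated by any `I ∈ 𝒬`. -/
def IsQTorsionFree (R : Type u) [CommRing R] (M : Type u) [AddCommGroup M] [Module R M] : Prop :=
  ∀ x : M, (∃ I : Ideal R, I.IsInQ ∧ ∀ a ∈ I, a • x = 0) → x = 0

/-- `Ext¹_R(A, B) = 0`. -/
def Ext1Vanishes (R : Type u) [CommRing R] (A B : Type u) [AddCommGroup A] [Module R A]
    [AddCommGroup B] [Module R B] : Prop :=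
  Subsingleton (((Ext R (ModuleCat.{u} R) 1).obj (Opposite.op (ModuleCat.of R A))).obj
    (ModuleCat.of R B))

/-- A Lucas module is a `𝒬`-torsion-free module `M` with `Ext¹_R(R/I, M) = 0` for all `I ∈ 𝒬`. -/
def IsLucasModule (R : Type u) [CommRing R] (M : Type u) [AddCommGroup M] [Module R M] : Prop :=
  IsQTorsionFree R M ∧ ∀ I : Ideal R, I.IsInQ → Ext1Vanishes R (R ⧸ I) M

section Aux
variable {R : Type u} [CommRing R]

lemma ModuleCat.subsingleton_iff_isZero (M : ModuleCat.{u} R) :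
    Subsingleton M ↔ Limits.IsZero M := by
  constructor
  · intro h; exact ModuleCat.isZero_of_subsingleton M
  · intro h
    refine ⟨fun x y => ?_⟩
    have hid : (𝟙 M : M ⟶ M).hom = (0 : M ⟶ M).hom := congrArg ModuleCat.Hom.hom (h.eq_of_src _ _)
    have hx : x = (𝟙 M : M ⟶ M).hom x := rfl
    have hy : y = (𝟙 M : M ⟶ M).hom y := rfl
    rw [hx, hy, hid]
    rfl

/-- Extension property of a linear map `p` w.r.t. a module `N`. -/
def ExtnProp {P A : Type u} [AddCommGroup P] [Module R P] [AddCommGroup A] [Module R A]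
    (p : P →ₗ[R] A) (N : Type u) [AddCommGroup N] [Module R N] : Prop :=
  ∀ f : (LinearMap.ker p) →ₗ[R] N, ∃ g : P →ₗ[R] N, ∀ x (hx : x ∈ LinearMap.ker p),
    g x = f ⟨x, hx⟩

lemma ext1Vanishes_iff_extnProp (X N : ModuleCat.{u} R) (P : ProjectiveResolution X) :
    Subsingleton (((Ext R (ModuleCat.{u} R) 1).obj (Opposite.op X)).obj N) ↔
    ExtnProp (R := R)
      ((P.π.f 0 ≫ (HomologicalComplex.singleObjXSelf (ComplexShape.down ℕ) 0 X).hom :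
        P.complex.X 0 ⟶ X).hom : P.complex.X 0 →ₗ[R] X) N := by
  set π0 : P.complex.X 0 ⟶ X :=
    P.π.f 0 ≫ (HomologicalComplex.singleObjXSelf (ComplexShape.down ℕ) 0 X).hom with hπ0
  have hker : ∀ x : P.complex.X 0, (π0 x = 0 ↔ P.π.f 0 x = 0) := by
    intro x
    rw [hπ0]
    constructor
    · intro h
      have hinj := (ModuleCat.mono_iff_injective
        ((HomologicalComplex.singleObjXSelf (ComplexShape.down ℕ) 0 X).hom)).mp inferInstance
      apply hinj
      simpa only [map_zero, CategoryTheory.comp_apply] using h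
    · intro h
      show (HomologicalComplex.singleObjXSelf (ComplexShape.down ℕ) 0 X).hom (P.π.f 0 x) = 0
      rw [h]; exact map_zero _
  have hdπ : ∀ x : P.complex.X 1, P.π.f 0 (P.complex.d 1 0 x) = 0 := by
    intro x
    show (P.complex.d 1 0 ≫ P.π.f 0) x = 0
    rw [P.complex_d_comp_π_f_zero]; rfl
  have hdd : ∀ x : P.complex.X 2, P.complex.d 1 0 (P.complex.d 2 1 x) = 0 := by
    intro x
    show (P.complex.d 2 1 ≫ P.complex.d 1 0) x = 0
    rw [P.complex.d_comp_d 2 1 0]; rfl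
  have step1 : Subsingleton (((Ext R (ModuleCat.{u} R) 1).obj (Opposite.op X)).obj N) ↔
      (P.complex.linearYonedaObj R N).ExactAt 1 := by
    rw [ModuleCat.subsingleton_iff_isZero,
      HomologicalComplex.exactAt_iff_isZero_homology]
    exact ⟨fun h => h.of_iso (P.isoExt 1 N).symm, fun h => h.of_iso (P.isoExt 1 N)⟩
  have step2 : (P.complex.linearYonedaObj R N).ExactAt 1 ↔
      (∀ f : P.complex.X 1 ⟶ N, P.complex.d 2 1 ≫ f = 0 →
        ∃ g : P.complex.X 0 ⟶ N, P.complex.d 1 0 ≫ g = f) := by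
    rw [(P.complex.linearYonedaObj R N).exactAt_iff' 0 1 2 (by simp) (by simp),
      ShortComplex.moduleCat_exact_iff]
    constructor
    · intro h f hf
      obtain ⟨g, hg⟩ := h f hf
      exact ⟨g, hg⟩
    · intro h f hf
      obtain ⟨g, hg⟩ := h f hf
      exact ⟨g, hg⟩
  rw [step1, step2]
  have hex0 := (ShortComplex.moduleCat_exact_iff _).mp P.exact₀
  have hex1 := (ShortComplex.moduleCat_exact_iff _).mp (P.exact_succ 0)
  -- `hex0 : ∀ x, P.π.f 0 x = 0 → ∃ x1, P.complex.d 1 0 x1 = x` (definitionally)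
  set d10' : P.complex.X 1 →ₗ[R] LinearMap.ker (π0.hom : P.complex.X 0 →ₗ[R] X) :=
    LinearMap.codRestrict _ (P.complex.d 1 0).hom (fun x =>
      LinearMap.mem_ker.mpr ((hker _).mpr (hdπ x))) with hd10'
  constructor
  · -- exactness → extension property
    intro hexact f
    obtain ⟨g, hg⟩ := hexact (ModuleCat.ofHom (f ∘ₗ d10' : P.complex.X 1 →ₗ[R] N) : P.complex.X 1 ⟶ N) (by
      ext x
      show f (d10' (P.complex.d 2 1 x)) = 0
      have hz : d10' (P.complex.d 2 1 x) = 0 := Subtype.ext (hdd x)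
      rw [hz, map_zero])
    refine ⟨g.hom, fun x hx => ?_⟩
    obtain ⟨x1, hx1⟩ := hex0 x ((hker x).mp hx)
    have hgx : g (P.complex.d 1 0 x1) = f (d10' x1) := DFunLike.congr_fun (congrArg ModuleCat.Hom.hom hg) x1
    have hsub : d10' x1 = ⟨x, hx⟩ := Subtype.ext hx1
    subst hx1
    rw [hgx, hsub]
  · -- extension property → exactness
    intro hext f hf
    have hsurj : Function.Surjective d10' := by
      rintro ⟨x, hx⟩
      obtain ⟨x1, hx1⟩ := hex0 x ((hker x).mp hx)
      exact ⟨x1, Subtype.ext hx1⟩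
    have hkerle : LinearMap.ker d10' ≤ LinearMap.ker (f.hom : P.complex.X 1 →ₗ[R] N) := by
      intro x hx
      have hx0 : P.complex.d 1 0 x = 0 := congrArg Subtype.val hx
      obtain ⟨x2, hx2⟩ := hex1 x hx0
      rw [LinearMap.mem_ker, ← hx2]
      exact DFunLike.congr_fun (congrArg ModuleCat.Hom.hom hf) x2
    set F : (LinearMap.ker (π0.hom : P.complex.X 0 →ₗ[R] X)) →ₗ[R] N :=
      ((LinearMap.ker d10').liftQ (f.hom : P.complex.X 1 →ₗ[R] N) hkerle) ∘ₗ
        (d10'.quotKerEquivOfSurjective hsurj).symm.toLinearMap with hF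
    have hFd : ∀ x1, F (d10' x1) = f x1 := by
      intro x1
      have h1 : (d10'.quotKerEquivOfSurjective hsurj) (Submodule.Quotient.mk x1) = d10' x1 := by
        simp [LinearMap.quotKerEquivOfSurjective]
      have h2 : (d10'.quotKerEquivOfSurjective hsurj).symm (d10' x1)
          = Submodule.Quotient.mk x1 := by
        rw [← h1, LinearEquiv.symm_apply_apply]
      show ((LinearMap.ker d10').liftQ (f.hom : P.complex.X 1 →ₗ[R] N) hkerle)
        ((d10'.quotKerEquivOfSurjective hsurj).symm (d10' x1)) = f x1
      rw [h2, Submodule.liftQ_apply]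
    obtain ⟨g, hg⟩ := hext F
    refine ⟨(ModuleCat.ofHom g : P.complex.X 0 ⟶ N), ?_⟩
    ext x1
    show g (P.complex.d 1 0 x1) = f x1
    exact (hg _ (d10' x1).2).trans (hFd x1)
end Aux

section Aux2
variable {R : Type u} [CommRing R]

/-- Transfer of the extension property between two projective surjections onto `A`. -/
lemma extnProp_transfer {P Q A N : Type u}
    [AddCommGroup P] [Module R P] [AddCommGroup Q] [Module R Q]
    [AddCommGroup A] [Module R A] [AddCommGroup N] [Module R N]
    [Module.Projective R P] [Module.Projective R Q]
    (p : P →ₗ[R] A) (q : Q →ₗ[R] A) (hp : Function.Surjective p) (hq : Function.Surjective q)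
    (h : ExtnProp q N) : ExtnProp p N := by
  obtain ⟨t, ht⟩ := Module.projective_lifting_property q p hq
  obtain ⟨r, hr⟩ := Module.projective_lifting_property p q hp
  have htk : ∀ x ∈ LinearMap.ker p, t x ∈ LinearMap.ker q := by
    intro x hx
    rw [LinearMap.mem_ker]
    have : q (t x) = p x := DFunLike.congr_fun ht x
    rw [this]; exact hx
  have hrk : ∀ y ∈ LinearMap.ker q, r y ∈ LinearMap.ker p := by
    intro y hy
    rw [LinearMap.mem_ker]
    have : p (r y) = q y := DFunLike.congr_fun hr y
    rw [this]; exact hy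
  intro f
  -- f ∘ r on ker q
  set fr : (LinearMap.ker q) →ₗ[R] N :=
    f ∘ₗ (LinearMap.restrict r hrk) with hfr
  obtain ⟨G, hG⟩ := h fr
  -- e : P → ker p, x ↦ x - r (t x)
  have hesub : ∀ x : P, x - r (t x) ∈ LinearMap.ker p := by
    intro x
    rw [LinearMap.mem_ker, map_sub]
    have h1 : p (r (t x)) = q (t x) := DFunLike.congr_fun hr (t x)
    have h2 : q (t x) = p x := DFunLike.congr_fun ht x
    rw [h1, h2, sub_self]
  set e : P →ₗ[R] (LinearMap.ker p) :=
    LinearMap.codRestrict _ (LinearMap.id - r ∘ₗ t) (fun x => hesub x) with he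
  refine ⟨f ∘ₗ e + G ∘ₗ t, fun x hx => ?_⟩
  have htx : t x ∈ LinearMap.ker q := htk x hx
  have hGtx : G (t x) = f ⟨r (t x), hrk _ htx⟩ := by
    rw [hG _ htx]
    rfl
  show f (e x) + G (t x) = f ⟨x, hx⟩
  rw [hGtx, ← map_add]
  congr 1
  apply Subtype.ext
  show (x - r (t x)) + r (t x) = x
  abel

lemma ext1Vanishes_iff_ideal (I : Ideal R) (N : Type u) [AddCommGroup N] [Module R N] :
    Ext1Vanishes R (R ⧸ I) N ↔
    ∀ f : I →ₗ[R] N, ∃ y : N, ∀ a (ha : a ∈ I), f ⟨a, ha⟩ = a • y := by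
  set X : ModuleCat.{u} R := ModuleCat.of R (R ⧸ I)
  set P := ProjectiveResolution.of X
  set π0 : P.complex.X 0 →ₗ[R] X :=
    (P.π.f 0 ≫ (HomologicalComplex.singleObjXSelf (ComplexShape.down ℕ) 0 X).hom :
      P.complex.X 0 ⟶ X).hom
  have hπ0surj : Function.Surjective π0 := by
    have h1 : Function.Surjective (P.π.f 0) :=
      (ModuleCat.epi_iff_surjective (P.π.f 0)).mp inferInstance
    have h2 : Function.Surjective
        ((HomologicalComplex.singleObjXSelf (ComplexShape.down ℕ) 0 X).hom) :=
      (ModuleCat.epi_iff_surjective _).mp inferInstance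
    exact h2.comp h1
  have hproj : Module.Projective R (P.complex.X 0) := by
    rw [IsProjective.iff_projective]
    have : Projective (P.complex.X 0) := P.projective 0
    exact this
  -- the quotient map as q
  set q : R →ₗ[R] (X : Type u) := (I.mkQ : R →ₗ[R] R ⧸ I) with hq
  have hqsurj : Function.Surjective q := Submodule.mkQ_surjective I
  have hkerq : LinearMap.ker q = I := Submodule.ker_mkQ I
  have hRproj : Module.Projective R R := inferInstance
  rw [show (Ext1Vanishes R (R ⧸ I) N) =
      Subsingleton (((Ext R (ModuleCat.{u} R) 1).obj (Opposite.op X)).obj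
        (ModuleCat.of R N)) from rfl,
    ext1Vanishes_iff_extnProp X (ModuleCat.of R N) P]
  constructor
  · intro hP f
    -- transfer ExtnProp π0 to ExtnProp q
    have hQ : ExtnProp q N := extnProp_transfer q π0 hqsurj hπ0surj hP
    -- use hQ with f transported along hkerq
    set f' : (LinearMap.ker q) →ₗ[R] N :=
      f ∘ₗ (LinearEquiv.ofEq _ _ hkerq).toLinearMap with hf'
    obtain ⟨g, hg⟩ := hQ f'
    refine ⟨g 1, fun a ha => ?_⟩
    have ha' : a ∈ LinearMap.ker q := by rw [hkerq]; exact ha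
    have h1 : g a = f' ⟨a, ha'⟩ := hg a ha'
    have h2 : f' ⟨a, ha'⟩ = f ⟨a, ha⟩ := rfl
    have h3 : g a = a • g 1 := by
      conv_lhs => rw [show a = a • (1 : R) by simp]
      rw [map_smul]
    rw [← h2, ← h1, h3]
  · intro hI
    -- ExtnProp q N from the ideal statement
    have hQ : ExtnProp q N := by
      intro f
      set f' : I →ₗ[R] N := f ∘ₗ (LinearEquiv.ofEq _ _ hkerq.symm).toLinearMap with hf'
      obtain ⟨y, hy⟩ := hI f'
      refine ⟨(LinearMap.toSpanSingleton R N y : R →ₗ[R] N), fun a ha => ?_⟩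
      have ha' : a ∈ I := hkerq ▸ ha
      have : f' ⟨a, ha'⟩ = a • y := hy a ha'
      exact this ▸ rfl
    exact extnProp_transfer π0 q hπ0surj hqsurj hQ
end Aux2


section AuxDL
variable (R : Type u) [CommRing R]
    (Γ : Type u) [Preorder Γ] [IsDirected Γ (· ≤ ·)] [DecidableEq Γ]
    (L : Γ → Type u) [∀ i, AddCommGroup (L i)] [∀ i, Module R (L i)]
    (φL : ∀ i j : Γ, i ≤ j → (L i →ₗ[R] L j))
    [DirectedSystem L (fun i j h => φL i j h)]

lemma span_smul_zero {R M : Type u} [CommRing R] [AddCommGroup M] [Module R M]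
    {s : Set R} {z : M} (h : ∀ b ∈ s, b • z = 0) :
    ∀ a ∈ Submodule.span R s, a • z = 0 := by
  intro a ha
  induction ha using Submodule.span_induction with
  | mem x hx => exact h x hx
  | zero => rw [zero_smul]
  | add x y hx hy ihx ihy => rw [add_smul, ihx, ihy, add_zero]
  | smul r x hx ih => rw [smul_eq_mul, mul_smul, ih, smul_zero]

lemma exists_common_zero {ι : Type u} (s : Finset ι) (i : Γ) (y : ι → L i)
    (h : ∀ a ∈ s, Module.DirectLimit.of R Γ L φL i (y a) = 0) :
    ∃ j, ∃ hij : i ≤ j, ∀ a ∈ s, φL i j hij (y a) = 0 := by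
  classical
  induction s using Finset.induction_on with
  | empty => exact ⟨i, le_refl i, by simp⟩
  | insert a s hns ih =>
    obtain ⟨j, hij, hj⟩ := ih (fun b hb => h b (Finset.mem_insert_of_mem hb))
    obtain ⟨j', hij', hj'⟩ := Module.DirectLimit.of.zero_exact (h a (Finset.mem_insert_self a s))
    obtain ⟨k, hk1, hk2⟩ := directed_of (· ≤ ·) j j'
    refine ⟨k, le_trans hij hk1, fun b hb => ?_⟩
    rcases Finset.mem_insert.mp hb with rfl | hb
    · have hmm := DirectedSystem.map_map (F := L) (f := fun i j h => φL i j h) hij' hk2 (y b)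
      rw [← hmm, hj', map_zero]
    · have hmm := DirectedSystem.map_map (F := L) (f := fun i j h => φL i j h) hij hk1 (y b)
      rw [← hmm, hj b hb, map_zero]
end AuxDL

/-- If `{Mᵢ}` is a direct system over a directed index set and each
`ψᵢ : Mᵢ → Lᵢ` is an `ℒ`-envelope with the unique mapping property (`ℒ` the class of
Lucas modules), the `Lᵢ` forming a direct system compatible with the `ψᵢ`, then the
induced map `lim→ Mᵢ → lim→ Lᵢ` is an `ℒ`-envelope of `lim→ Mᵢ`. -/
theorem directLimit_of_envelopes_is_envelope (R : Type u) [CommRing R]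
    (Γ : Type u) [Preorder Γ] [IsDirected Γ (· ≤ ·)] [DecidableEq Γ]
    (M : Γ → Type u) [∀ i, AddCommGroup (M i)] [∀ i, Module R (M i)]
    (φM : ∀ i j : Γ, i ≤ j → (M i →ₗ[R] M j))
    [DirectedSystem M (fun i j h => φM i j h)]
    (L : Γ → Type u) [∀ i, AddCommGroup (L i)] [∀ i, Module R (L i)]
    (φL : ∀ i j : Γ, i ≤ j → (L i →ₗ[R] L j))
    [DirectedSystem L (fun i j h => φL i j h)]
    (ψ : ∀ i, M i →ₗ[R] L i)
    -- the `ψᵢ` form a morphism of direct systems (the transition maps of `{Lᵢ}` being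
    -- the ones induced by the unique mapping property)
    (hcompat : ∀ (i j : Γ) (h : i ≤ j) (x : M i), ψ j (φM i j h x) = φL i j h (ψ i x))
    -- each `ψᵢ : Mᵢ → Lᵢ` is an `ℒ`-envelope with the unique mapping property
    (hLucas : ∀ i, IsLucasModule R (L i))
    (hpre : ∀ i, ∀ F' : ModuleCat.{u} R, IsLucasModule R F' →
      Function.Surjective (fun h : L i →ₗ[R] F' => h.comp (ψ i)))
    (henv : ∀ i, ∀ h : L i →ₗ[R] L i, h.comp (ψ i) = ψ i → Function.Bijective h)
    (hump : ∀ i, ∀ F' : ModuleCat.{u} R, IsLucasModule R F' → ∀ f' : M i →ₗ[R] F',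
      ∃! g : L i →ₗ[R] F', g.comp (ψ i) = f') :
    -- conclusion: the induced map `Φ : lim→ Mᵢ → lim→ Lᵢ` is an `ℒ`-envelope
    letI Φ : Module.DirectLimit M φM →ₗ[R] Module.DirectLimit L φL :=
      Module.DirectLimit.lift R Γ M φM
        (fun i => (Module.DirectLimit.of R Γ L φL i).comp (ψ i))
        (fun i j hij x => by simp [hcompat i j hij x])
    IsLucasModule R (Module.DirectLimit L φL) ∧
    (∀ F' : ModuleCat.{u} R, IsLucasModule R F' →
      Function.Surjective
        (fun h : Module.DirectLimit L φL →ₗ[R] F' => h.comp Φ)) ∧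
    (∀ h : Module.DirectLimit L φL →ₗ[R] Module.DirectLimit L φL,
      h.comp Φ = Φ → Function.Bijective h) := by
  suffices H : ∀ Φ : Module.DirectLimit M φM →ₗ[R] Module.DirectLimit L φL,
      (∀ (i : Γ) (x : M i), Φ ((Module.DirectLimit.of R Γ M φM i) x)
        = (Module.DirectLimit.of R Γ L φL i) (ψ i x)) →
      (IsLucasModule R (Module.DirectLimit L φL) ∧
      (∀ F' : ModuleCat.{u} R, IsLucasModule R F' →
        Function.Surjective
          (fun h : Module.DirectLimit L φL →ₗ[R] F' => h.comp Φ)) ∧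
      (∀ h : Module.DirectLimit L φL →ₗ[R] Module.DirectLimit L φL,
        h.comp Φ = Φ → Function.Bijective h)) by
    exact H _ (fun i x => Module.DirectLimit.lift_of _ _ _)
  intro Φ hΦof
  by_cases hΓ : Nonempty Γ
  case neg =>
    haveI : IsEmpty Γ := not_nonempty_iff.mp hΓ
    haveI hsubL : Subsingleton (Module.DirectLimit L φL) := inferInstance
    haveI hsubM : Subsingleton (Module.DirectLimit M φM) := inferInstance
    refine ⟨⟨fun x _ => Subsingleton.elim x 0, fun I hI => ?_⟩, ?_, ?_⟩
    · rw [ext1Vanishes_iff_ideal]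
      exact fun f => ⟨0, fun a ha => Subsingleton.elim _ _⟩
    · intro F' hF' f'
      refine ⟨0, ?_⟩
      show (0 : Module.DirectLimit L φL →ₗ[R] F').comp Φ = f'
      apply LinearMap.ext
      intro z
      rw [Subsingleton.elim z 0]
      simp
    · intro h _
      exact ⟨fun a b _ => Subsingleton.elim a b, fun z => ⟨z, Subsingleton.elim _ _⟩⟩
  case pos =>
  haveI := hΓ
  -- Part A : the direct limit is 𝒬-torsion-free
  have tfL : IsQTorsionFree R (Module.DirectLimit L φL) := by
    rintro x ⟨I, hIQ, hann⟩
    obtain ⟨i, xi, rfl⟩ := Module.DirectLimit.exists_of x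
    obtain ⟨s, hs⟩ := hIQ.1
    have h0 : ∀ a ∈ s, (Module.DirectLimit.of R Γ L φL i) (a • xi) = 0 := by
      intro a ha
      rw [map_smul]
      exact hann a (hs ▸ Submodule.subset_span ha)
    obtain ⟨j, hij, hj⟩ := exists_common_zero R Γ L φL s i (fun a => a • xi) h0
    have hj' : ∀ a ∈ I, a • (φL i j hij xi) = 0 := by
      rw [← hs]
      refine span_smul_zero ?_
      intro b hb
      rw [← map_smul]
      exact hj b hb
    have hzero : φL i j hij xi = 0 := (hLucas j).1 _ ⟨I, hIQ, hj'⟩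
    have : (Module.DirectLimit.of R Γ L φL i) xi
        = (Module.DirectLimit.of R Γ L φL j) (φL i j hij xi) :=
      (Module.DirectLimit.of_f).symm
    rw [this, hzero, map_zero]
  -- Part B : Ext¹(R/I, lim L) = 0 for I ∈ 𝒬
  have extL : ∀ I : Ideal R, I.IsInQ →
      Ext1Vanishes R (R ⧸ I) (Module.DirectLimit L φL) := by
    intro I hIQ
    rw [ext1Vanishes_iff_ideal]
    intro f
    obtain ⟨J, hJI, hJfg, hJd⟩ := hIQ.2
    have hJQ : J.IsInQ := ⟨hJfg, J, le_refl J, hJfg, hJd⟩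
    obtain ⟨s, hs⟩ := hJfg
    have hsJ : ∀ b ∈ s, b ∈ J := fun b hb => hs ▸ Submodule.subset_span hb
    set F : J →ₗ[R] Module.DirectLimit L φL := f ∘ₗ Submodule.inclusion hJI with hF
    have hFf : ∀ (b : R) (hb : b ∈ J), F ⟨b, hb⟩ = f ⟨b, hJI hb⟩ := fun b hb => rfl
    -- choose representatives at a common stage i
    have hrep : ∀ b : {x // x ∈ s}, ∃ p : Σ i : Γ, L i,
        (Module.DirectLimit.of R Γ L φL p.1) p.2 = F ⟨(b : R), hsJ b b.2⟩ := by
      intro b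
      obtain ⟨i, y, hy⟩ := Module.DirectLimit.exists_of (F ⟨(b : R), hsJ b b.2⟩)
      exact ⟨⟨i, y⟩, hy⟩
    choose rep hrepeq using hrep
    obtain ⟨i, hi⟩ := (Finset.univ.image (fun b : {x // x ∈ s} => (rep b).1)).exists_le
    have hle : ∀ b : {x // x ∈ s}, (rep b).1 ≤ i := fun b =>
      hi _ (Finset.mem_image_of_mem _ (Finset.mem_univ b))
    set y : {x // x ∈ s} → L i := fun b => φL (rep b).1 i (hle b) (rep b).2 with hy
    have hyF : ∀ b : {x // x ∈ s}, (Module.DirectLimit.of R Γ L φL i) (y b)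
        = F ⟨(b : R), hsJ b b.2⟩ := by
      intro b
      rw [hy]
      show (Module.DirectLimit.of R Γ L φL i) (φL (rep b).1 i (hle b) (rep b).2) = _
      rw [Module.DirectLimit.of_f]
      exact hrepeq b
    -- pass to a stage j where the compatibility relations hold
    have hcompat0 : ∀ q : {x // x ∈ s} × {x // x ∈ s},
        (Module.DirectLimit.of R Γ L φL i)
          ((q.2 : R) • y q.1 - (q.1 : R) • y q.2) = 0 := by
      rintro ⟨b, b'⟩
      rw [map_sub, map_smul, map_smul, hyF, hyF]
      have h1 : (b' : R) • (⟨(b : R), hsJ b b.2⟩ : J)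
          = (b : R) • (⟨(b' : R), hsJ b' b'.2⟩ : J) :=
        Subtype.ext (by simp [smul_eq_mul, mul_comm])
      rw [← map_smul, ← map_smul, h1, sub_self]
    obtain ⟨j, hij, hjz⟩ := exists_common_zero R Γ L φL Finset.univ i
      (fun q : {x // x ∈ s} × {x // x ∈ s} => (q.2 : R) • y q.1 - (q.1 : R) • y q.2)
      (fun q _ => hcompat0 q)
    set z : {x // x ∈ s} → L j := fun b => φL i j hij (y b) with hz
    have hzc : ∀ b b' : {x // x ∈ s}, (b' : R) • z b = (b : R) • z b' := by
      intro b b'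
      have h1 := hjz (b, b') (Finset.mem_univ _)
      rw [map_sub, map_smul, map_smul] at h1
      exact sub_eq_zero.mp h1
    have hzF : ∀ b : {x // x ∈ s}, (Module.DirectLimit.of R Γ L φL j) (z b)
        = F ⟨(b : R), hsJ b b.2⟩ := by
      intro b
      rw [hz]
      show (Module.DirectLimit.of R Γ L φL j) (φL i j hij (y b)) = _
      rw [Module.DirectLimit.of_f]
      exact hyF b
    -- the map J → L j, Σ r_b • b ↦ Σ r_b • z b
    set T : ({x // x ∈ s} →₀ R) →ₗ[R] L j := Finsupp.linearCombination R z with hT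
    set S : ({x // x ∈ s} →₀ R) →ₗ[R] R :=
      Finsupp.linearCombination R (fun b => (b : R)) with hS
    have hrangeS : LinearMap.range S = J := by
      rw [hS, Finsupp.range_linearCombination]
      have hr : Set.range (fun b : {x // x ∈ s} => (b : R)) = ↑s := by
        ext r; simp
      rw [hr]
      exact hs
    have hkerST : ∀ c, S c = 0 → T c = 0 := by
      intro c hc
      have hann : ∀ b : {x // x ∈ s}, (b : R) • T c = 0 := by
        intro b
        have h1 : (b : R) • T c = c.sum (fun b' r => (r * (b' : R)) • z b) := by
          rw [hT, Finsupp.linearCombination_apply, Finsupp.smul_sum]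
          apply Finsupp.sum_congr
          intro b' _
          rw [smul_comm, hzc b' b, mul_smul]
        have h2 : c.sum (fun b' r => (r * (b' : R)) • z b) = (S c) • z b := by
          rw [hS, Finsupp.linearCombination_apply, Finsupp.sum, Finsupp.sum, Finset.sum_smul]
          apply Finset.sum_congr rfl
          intro b' _
          rw [smul_eq_mul]
        rw [h1, h2, hc, zero_smul]
      have hall : ∀ a ∈ J, a • T c = 0 := by
        rw [← hs]
        refine span_smul_zero ?_
        intro b hb
        exact hann ⟨b, hb⟩
      exact (hLucas j).1 _ ⟨J, hJQ, hall⟩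
    set Sc : ({x // x ∈ s} →₀ R) →ₗ[R] J :=
      S.codRestrict J (fun c => hrangeS ▸ LinearMap.mem_range_self S c) with hSc
    have hScsurj : Function.Surjective Sc := by
      rintro ⟨a, haJ⟩
      have ha' : a ∈ LinearMap.range S := hrangeS.symm ▸ haJ
      obtain ⟨c, hc⟩ := ha'
      exact ⟨c, Subtype.ext hc⟩
    have hkerle : LinearMap.ker Sc ≤ LinearMap.ker T := by
      intro c hc
      have h1 : S c = 0 := congrArg Subtype.val hc
      exact hkerST c h1
    set g : J →ₗ[R] L j := ((LinearMap.ker Sc).liftQ T hkerle) ∘ₗ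
      (Sc.quotKerEquivOfSurjective hScsurj).symm.toLinearMap with hg
    have hgSc : ∀ c, g (Sc c) = T c := by
      intro c
      have h1 : (Sc.quotKerEquivOfSurjective hScsurj) (Submodule.Quotient.mk c) = Sc c := by
        simp [LinearMap.quotKerEquivOfSurjective]
      have h2 : (Sc.quotKerEquivOfSurjective hScsurj).symm (Sc c)
          = Submodule.Quotient.mk c := by
        rw [← h1, LinearEquiv.symm_apply_apply]
      show ((LinearMap.ker Sc).liftQ T hkerle)
        ((Sc.quotKerEquivOfSurjective hScsurj).symm (Sc c)) = T c
      rw [h2, Submodule.liftQ_apply]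
    -- extend g to R using Ext vanishing of L j
    obtain ⟨w, hw⟩ := ((ext1Vanishes_iff_ideal J (L j)).mp ((hLucas j).2 J hJQ)) g
    set Y : Module.DirectLimit L φL := (Module.DirectLimit.of R Γ L φL j) w with hY
    have hbY : ∀ b : {x // x ∈ s}, (b : R) • Y = F ⟨(b : R), hsJ b b.2⟩ := by
      intro b
      have h1 : (b : R) • w = g ⟨(b : R), hsJ b b.2⟩ := (hw (b : R) (hsJ b b.2)).symm
      have hgb : g ⟨(b : R), hsJ b b.2⟩ = z b := by
        have h2 : (⟨(b : R), hsJ b b.2⟩ : J) = Sc (Finsupp.single b 1) := by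
          apply Subtype.ext
          show (b : R) = S (Finsupp.single b 1)
          rw [hS, Finsupp.linearCombination_single, one_smul]
        rw [h2, hgSc, hT, Finsupp.linearCombination_single, one_smul]
      rw [hY, ← map_smul, h1, hgb]
      exact hzF b
    refine ⟨Y, fun a ha => ?_⟩
    -- b • (f ⟨a⟩ - a • Y) = 0 for all b ∈ J
    have hd : ∀ b ∈ J, b • (f ⟨a, ha⟩ - a • Y) = 0 := by
      rw [← hs]
      refine span_smul_zero ?_
      intro b hb
      have hbJ : b ∈ J := hsJ b hb
      rw [smul_sub]
      have h1 : b • f ⟨a, ha⟩ = f ⟨b * a, I.mul_mem_left b ha⟩ := by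
        rw [← map_smul]
        congr 1
      have h2 : b • (a • Y) = a • (b • Y) := smul_comm b a Y
      have h3 : (b : R) • Y = F ⟨b, hbJ⟩ := hbY ⟨b, hb⟩
      have h4 : a • F ⟨b, hbJ⟩ = f ⟨a * b, I.mul_mem_left a (hJI hbJ)⟩ := by
        rw [← map_smul]
        have h5 : a • (⟨b, hbJ⟩ : J) = ⟨a * b, J.mul_mem_left a hbJ⟩ :=
          Subtype.ext (by simp [smul_eq_mul])
        rw [h5, hFf]
      have h6 : f ⟨b * a, I.mul_mem_left b ha⟩ = f ⟨a * b, I.mul_mem_left a (hJI hbJ)⟩ := by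
        congr 1
        exact Subtype.ext (by simp [mul_comm])
      rw [h1, h2, h3, h4, h6, sub_self]
    have h7 := tfL (f ⟨a, ha⟩ - a • Y) ⟨J, hJQ, hd⟩
    exact sub_eq_zero.mp h7
  have lucasLim : IsLucasModule R (Module.DirectLimit L φL) := ⟨tfL, extL⟩
  refine ⟨lucasLim, ?_, ?_⟩
  -- Part C : preenvelope property
  · intro F' hF' f'
    have hex : ∀ i : Γ, ∃! g : L i →ₗ[R] F',
        g.comp (ψ i) = f'.comp (Module.DirectLimit.of R Γ M φM i) :=
      fun i => hump i F' hF' (f'.comp (Module.DirectLimit.of R Γ M φM i))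
    choose G hG hGuniq using hex
    have hGψ : ∀ (i : Γ) (m : M i), G i (ψ i m)
        = f' ((Module.DirectLimit.of R Γ M φM i) m) :=
      fun i m => DFunLike.congr_fun (hG i) m
    have hGcomp : ∀ (i j : Γ) (hij : i ≤ j) (x : L i), G j (φL i j hij x) = G i x := by
      intro i j hij x
      have h1 : ((G j).comp (φL i j hij)).comp (ψ i)
          = f'.comp (Module.DirectLimit.of R Γ M φM i) := by
        apply LinearMap.ext
        intro m
        show G j (φL i j hij (ψ i m)) = f' ((Module.DirectLimit.of R Γ M φM i) m)
        rw [← hcompat i j hij m, hGψ j (φM i j hij m), Module.DirectLimit.of_f]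
      have h3 : (G j).comp (φL i j hij) = G i := hGuniq i _ h1
      exact DFunLike.congr_fun h3 x
    refine ⟨Module.DirectLimit.lift R Γ L φL G hGcomp, ?_⟩
    show (Module.DirectLimit.lift R Γ L φL G hGcomp).comp Φ = f'
    apply LinearMap.ext
    intro zz
    refine Module.DirectLimit.induction_on zz ?_
    intro i x
    show (Module.DirectLimit.lift R Γ L φL G hGcomp)
      (Φ ((Module.DirectLimit.of R Γ M φM i) x)) = _
    rw [hΦof i x, Module.DirectLimit.lift_of]
    exact hGψ i x
  -- Part D : envelope property
  · intro h hhΦ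
    have hLlucas' : IsLucasModule R (ModuleCat.of R (Module.DirectLimit L φL)) := lucasLim
    have hid : ∀ zz : Module.DirectLimit L φL, h zz = zz := by
      have hof : ∀ i : Γ, h ∘ₗ (Module.DirectLimit.of R Γ L φL i)
          = Module.DirectLimit.of R Γ L φL i := by
        intro i
        obtain ⟨g0, hg0, hg0u⟩ := hump i (ModuleCat.of R (Module.DirectLimit L φL)) hLlucas'
          ((Module.DirectLimit.of R Γ L φL i) ∘ₗ ψ i)
        have e1 : (h ∘ₗ (Module.DirectLimit.of R Γ L φL i)).comp (ψ i)
            = (Module.DirectLimit.of R Γ L φL i) ∘ₗ ψ i := by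
          apply LinearMap.ext
          intro m
          show h ((Module.DirectLimit.of R Γ L φL i) (ψ i m))
            = (Module.DirectLimit.of R Γ L φL i) (ψ i m)
          have h5 : h (Φ ((Module.DirectLimit.of R Γ M φM i) m))
              = Φ ((Module.DirectLimit.of R Γ M φM i) m) :=
            DFunLike.congr_fun hhΦ _
          rw [hΦof i m] at h5
          exact h5
        have e2 := hg0u _ e1
        have e3 := hg0u (Module.DirectLimit.of R Γ L φL i) rfl
        rw [e2, ← e3]
      intro zz
      refine Module.DirectLimit.induction_on zz ?_
      intro i x
      exact DFunLike.congr_fun (hof i) x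
    exact ⟨fun a b hab => by rw [← hid a, ← hid b, hab],
      fun zzz => ⟨zzz, hid zzz⟩⟩
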